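/- Fix 1 ≤ i ≤ n, a regime sequence a_i,…,a_n ∈ {1,…,J} and observations y_i,…,y_n ∈ ℝ^p. Define ψ_u : ℝ^m → ℝ backward by ψ_n(z) := g(a_n,z;y_n) and, for i ≤ u < n, ψ_u(z) := g(a_u,z;y_u) ∫_{ℝ^m} m(a_{u+1},z;w) ψ_{u+1}(w) dw. Define Ω̂_n := B_{a_n}'Ḡ_{a_n}⁻¹B_{a_n}, λ̂_n := B_{a_n}'Ḡ_{a_n}⁻¹(y_n−c_{a_n}) and, backward for i ≤ u < n: M_{u+1} := H_{a_{u+1}}'Ω̂_{u+1}H_{a_{u+1}} + I_m, m_{u+1} := λ̂_{u+1} − Ω̂_{u+1}d_{a_{u+1}}, Ω_u := T_{a_{u+1}}'(I_m − Ω̂_{u+1}H_{a_{u+1}}M_{u+1}⁻¹H_{a_{u+1}}')Ω̂_{u+1}T_{a_{u+1}}, λ_u := T_{a_{u+1}}'(I_m − Ω̂_{u+1}H_{a_{u+1}}M_{u+1}⁻¹H_{a_{u+1}}')m_{u+1}, Ω̂_u := Ω_u + B_{a_u}'Ḡ_{a_u}⁻¹B_{a_u}, λ̂_u := λ_u + B_{a_u}'Ḡ_{a_u}⁻¹(y_u−c_{a_u}).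 Then each Ω̂_u is positive semidefinite and, for every i ≤ u ≤ n, there exists a constant C_u > 0 such that ψ_u(z) = C_u exp(−½ z'Ω̂_u z + λ̂_u'z) for all z ∈ ℝ^m. -/

import Mathlib

open MeasureTheory Matrix Real

/-- Gaussian density on `ℝ^k` with mean `μ` and covariance `S`. -/
noncomputable def gaussPdf {k : ℕ} (μ : Fin k → ℝ) (S : Matrix (Fin k) (Fin k) ℝ)
    (x : Fin k → ℝ) : ℝ :=
  ((2 * π) ^ (k : ℝ) * S.det) ^ (-(1 : ℝ) / 2) *
    Real.exp (-(1 / 2 : ℝ) * ((x - μ) ⬝ᵥ (S⁻¹ *ᵥ (x - μ))))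

/-- State transition density `m(a,z';z) = φ_{d_a + T_a z', H_a H_a'}(z)`. -/
noncomputable def mKer {m J : ℕ} (dv : Fin J → Fin m → ℝ)
    (T H : Fin J → Matrix (Fin m) (Fin m) ℝ) (a : Fin J) (z w : Fin m → ℝ) : ℝ :=
  gaussPdf (dv a + T a *ᵥ z) (H a * (H a)ᵀ) w

/-- Observation density `g(a,z;y) = φ_{c_a + B_a z, G_a G_a'}(y)`. -/
noncomputable def gObs {m p J : ℕ} (cv : Fin J → Fin p → ℝ)
    (B : Fin J → Matrix (Fin p) (Fin m) ℝ) (G : Fin J → Matrix (Fin p) (Fin p) ℝ)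
    (a : Fin J) (z : Fin m → ℝ) (y : Fin p → ℝ) : ℝ :=
  gaussPdf (cv a + B a *ᵥ z) (G a * (G a)ᵀ) y

/-- Backward likelihood `ψ_u(z)`, indexed by the number of backward steps `k = n - u`:
`ψ_n(z) = g(a_n,z;y_n)` and `ψ_u(z) = g(a_u,z;y_u) ∫ m(a_{u+1},z;w) ψ_{u+1}(w) dw`. -/
noncomputable def backDens {m p J : ℕ} (dv : Fin J → Fin m → ℝ)
    (T H : Fin J → Matrix (Fin m) (Fin m) ℝ) (cv : Fin J → Fin p → ℝ)
    (B : Fin J → Matrix (Fin p) (Fin m) ℝ) (G : Fin J → Matrix (Fin p) (Fin p) ℝ)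
    (a : ℕ → Fin J) (y : ℕ → Fin p → ℝ) (n : ℕ) : ℕ → (Fin m → ℝ) → ℝ
  | 0 => fun z => gObs cv B G (a n) z (y n)
  | (k + 1) => fun z =>
      gObs cv B G (a (n - (k + 1))) z (y (n - (k + 1))) *
        ∫ w : Fin m → ℝ, mKer dv T H (a (n - k)) z w * backDens dv T H cv B G a y n k w

/-- FFBS backward recursion: at backward step `k = n - u` this returns `(Ω̂_u, λ̂_u)`. -/
noncomputable def ffbsCoef {m p J : ℕ} (dv : Fin J → Fin m → ℝ)
    (T H : Fin J → Matrix (Fin m) (Fin m) ℝ) (cv : Fin J → Fin p → ℝ)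
    (B : Fin J → Matrix (Fin p) (Fin m) ℝ) (G : Fin J → Matrix (Fin p) (Fin p) ℝ)
    (a : ℕ → Fin J) (y : ℕ → Fin p → ℝ) (n : ℕ) :
    ℕ → Matrix (Fin m) (Fin m) ℝ × (Fin m → ℝ)
  | 0 =>
      ((B (a n))ᵀ * (G (a n) * (G (a n))ᵀ)⁻¹ * B (a n),
        ((B (a n))ᵀ * (G (a n) * (G (a n))ᵀ)⁻¹) *ᵥ (y n - cv (a n)))
  | (k + 1) =>
      let prev := ffbsCoef dv T H cv B G a y n k
      let j := a (n - k)  -- this is `a_{u+1}` for `u = n - (k+1)`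
      let M := (H j)ᵀ * prev.1 * H j + 1
      let mv := prev.2 - prev.1 *ᵥ dv j
      let F := 1 - prev.1 * H j * M⁻¹ * (H j)ᵀ
      let Ωu := (T j)ᵀ * F * prev.1 * T j
      let lamu := (T j)ᵀ *ᵥ (F *ᵥ mv)
      let u := n - (k + 1)
      let Gb := G (a u) * (G (a u))ᵀ
      (Ωu + (B (a u))ᵀ * Gb⁻¹ * B (a u),
        lamu + ((B (a u))ᵀ * Gb⁻¹) *ᵥ (y u - cv (a u)))

section FFBSAux

open MeasureTheory Matrix Real

private lemma real_ct {ι κ : Type*} (A : Matrix ι κ ℝ) : Aᴴ = Aᵀ := by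
  ext i j
  simp [Matrix.conjTranspose_apply]

private lemma psd_sqrt {k : ℕ} {A : Matrix (Fin k) (Fin k) ℝ} (hA : A.PosSemidef) :
    ∃ B : Matrix (Fin k) (Fin k) ℝ, A = Bᴴ * B := by
  open scoped MatrixOrder in
  obtain ⟨X, hX, -, hXA⟩ := CFC.exists_sqrt_of_isSelfAdjoint_of_quasispectrumRestricts hA.isHermitian
          (QuasispectrumRestricts.nnreal_of_nonneg hA.nonneg)
  exact ⟨X, by rw [← hXA, ← Matrix.star_eq_conjTranspose, hX.star_eq]⟩

private lemma herm_t {k : ℕ} {A : Matrix (Fin k) (Fin k) ℝ} (h : A.IsHermitian) : Aᵀ = A := by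
  rw [← real_ct]; exact h

private lemma dot_symm {k : ℕ} {S : Matrix (Fin k) (Fin k) ℝ} (hS : Sᵀ = S) (x y : Fin k → ℝ) :
    x ⬝ᵥ S *ᵥ y = y ⬝ᵥ S *ᵥ x := by
  rw [dotProduct_mulVec, ← mulVec_transpose, hS]
  exact dotProduct_comm _ _

private lemma dot_shift {k : ℕ} {S : Matrix (Fin k) (Fin k) ℝ} (hS : Sᵀ = S) (x w : Fin k → ℝ) :
    x ⬝ᵥ S *ᵥ w = (S *ᵥ x) ⬝ᵥ w := by
  rw [dotProduct_mulVec, ← mulVec_transpose, hS]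

private lemma dot_tmul {k l : ℕ} (Tm : Matrix (Fin l) (Fin k) ℝ) (z : Fin k → ℝ) (w : Fin l → ℝ) :
    z ⬝ᵥ Tmᵀ *ᵥ w = (Tm *ᵥ z) ⬝ᵥ w := by
  rw [dotProduct_mulVec, vecMul_transpose]

private lemma tmul_dot {k l : ℕ} (Tm : Matrix (Fin l) (Fin k) ℝ) (w : Fin l → ℝ) (z : Fin k → ℝ) :
    (Tmᵀ *ᵥ w) ⬝ᵥ z = w ⬝ᵥ (Tm *ᵥ z) := by
  rw [dotProduct_comm, dot_tmul, dotProduct_comm]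

private lemma woodbury {k : ℕ} (U V : Matrix (Fin k) (Fin k) ℝ) (h : IsUnit (V * U + 1).det) :
    (1 + U * V) * (1 - U * (V * U + 1)⁻¹ * V) = 1 ∧
    (1 - U * (V * U + 1)⁻¹ * V) * (1 + U * V) = 1 := by
  have h1 : (V * U + 1) * (V * U + 1)⁻¹ = 1 := Matrix.mul_nonsing_inv _ h
  have h2 : (V * U + 1)⁻¹ * (V * U + 1) = 1 := Matrix.nonsing_inv_mul _ h
  constructor
  · calc (1 + U * V) * (1 - U * (V * U + 1)⁻¹ * V)
        = 1 + U * V - U * ((V * U + 1) * (V * U + 1)⁻¹) * V := by noncomm_ring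
      _ = 1 := by rw [h1]; noncomm_ring
  · calc (1 - U * (V * U + 1)⁻¹ * V) * (1 + U * V)
        = 1 + U * V - U * ((V * U + 1)⁻¹ * (V * U + 1)) * V := by noncomm_ring
      _ = 1 := by rw [h2]; noncomm_ring

private lemma psd_conj {k l : ℕ} {A : Matrix (Fin k) (Fin k) ℝ} (hA : A.PosSemidef)
    (Bm : Matrix (Fin k) (Fin l) ℝ) : (Bmᵀ * A * Bm).PosSemidef := by
  have := hA.conjTranspose_mul_mul_same Bm
  rwa [real_ct] at this

private lemma posDef_mul_transpose {k : ℕ} {Hm : Matrix (Fin k) (Fin k) ℝ}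
    (hH : IsUnit Hm.det) : (Hm * Hmᵀ).PosDef := by
  have hpsd : (Hm * Hmᵀ).PosSemidef := by
    have := Matrix.posSemidef_self_mul_conjTranspose Hm
    rwa [real_ct] at this
  refine Matrix.PosDef.of_dotProduct_mulVec_pos hpsd.isHermitian fun x hx => ?_
  have hHt : IsUnit Hmᵀ := (Matrix.isUnit_iff_isUnit_det _).mpr (by rwa [Matrix.det_transpose])
  have hxv : Hmᵀ *ᵥ x ≠ 0 := by
    intro hc
    apply hx
    have hinj : Function.Injective (Hmᵀ.mulVec) := Matrix.mulVec_injective_iff_isUnit.mpr hHt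
    have : Hmᵀ *ᵥ x = Hmᵀ *ᵥ 0 := by simpa using hc
    simpa using hinj this
  have hval : star x ⬝ᵥ (Hm * Hmᵀ) *ᵥ x = (Hmᵀ *ᵥ x) ⬝ᵥ (Hmᵀ *ᵥ x) := by
    rw [show (star x : Fin k → ℝ) = x from star_trivial x]
    rw [← Matrix.mulVec_mulVec, Matrix.dotProduct_mulVec, ← Matrix.mulVec_transpose]
  rw [hval]
  rcases lt_or_eq_of_le (Finset.sum_nonneg fun i _ => mul_self_nonneg ((Hmᵀ *ᵥ x) i)) with h | h
  · exact h
  · exact absurd (dotProduct_self_eq_zero.mp h.symm) hxv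

private lemma quad3 {k : ℕ} {P : Matrix (Fin k) (Fin k) ℝ} (hP : Pᵀ = P)
    (x1 x2 x3 : Fin k → ℝ) :
    (x1 + x2 + x3) ⬝ᵥ P *ᵥ (x1 + x2 + x3) =
      x1 ⬝ᵥ P *ᵥ x1 + x2 ⬝ᵥ P *ᵥ x2 + x3 ⬝ᵥ P *ᵥ x3 +
        2 * (x1 ⬝ᵥ P *ᵥ x2) + 2 * (x1 ⬝ᵥ P *ᵥ x3) + 2 * (x2 ⬝ᵥ P *ᵥ x3) := by
  have e21 := dot_symm hP x2 x1
  have e31 := dot_symm hP x3 x1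
  have e32 := dot_symm hP x3 x2
  simp only [Matrix.mulVec_add, dotProduct_add, add_dotProduct]
  rw [e21, e31, e32]; ring

private lemma quad2 {k : ℕ} {P : Matrix (Fin k) (Fin k) ℝ} (hP : Pᵀ = P)
    (x1 x2 : Fin k → ℝ) :
    (x1 + x2) ⬝ᵥ P *ᵥ (x1 + x2) =
      x1 ⬝ᵥ P *ᵥ x1 + x2 ⬝ᵥ P *ᵥ x2 + 2 * (x1 ⬝ᵥ P *ᵥ x2) := by
  have e21 := dot_symm hP x2 x1
  simp only [Matrix.mulVec_add, dotProduct_add, add_dotProduct]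
  rw [e21]; ring

private lemma quad_sub_expand {pp mm : ℕ} {Q : Matrix (Fin pp) (Fin pp) ℝ} (hQ : Qᵀ = Q)
    (Bm : Matrix (Fin pp) (Fin mm) ℝ) (v : Fin pp → ℝ) (z : Fin mm → ℝ) :
    -(1 / 2 : ℝ) * ((v - Bm *ᵥ z) ⬝ᵥ Q *ᵥ (v - Bm *ᵥ z)) =
      -(1 / 2 : ℝ) * (z ⬝ᵥ (Bmᵀ * Q * Bm) *ᵥ z) + ((Bmᵀ * Q) *ᵥ v) ⬝ᵥ z +
        -(1 / 2 : ℝ) * (v ⬝ᵥ Q *ᵥ v) := by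
  have e1 : (Bm *ᵥ z) ⬝ᵥ Q *ᵥ v = v ⬝ᵥ Q *ᵥ (Bm *ᵥ z) := dot_symm hQ _ _
  have e2 : z ⬝ᵥ (Bmᵀ * Q * Bm) *ᵥ z = (Bm *ᵥ z) ⬝ᵥ Q *ᵥ (Bm *ᵥ z) := by
    rw [← Matrix.mulVec_mulVec, ← Matrix.mulVec_mulVec, dot_tmul]
  have e3 : ((Bmᵀ * Q) *ᵥ v) ⬝ᵥ z = v ⬝ᵥ Q *ᵥ (Bm *ᵥ z) := by
    rw [← Matrix.mulVec_mulVec, tmul_dot, ← dot_shift hQ]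
  rw [Matrix.mulVec_sub, dotProduct_sub, sub_dotProduct, sub_dotProduct,
    e1, e2, e3]
  ring

private lemma exp_comb {k : ℕ} {Hb Om : Matrix (Fin k) (Fin k) ℝ} (hHb : Hbᵀ = Hb)
    (μ lam w : Fin k → ℝ) :
    -(1 / 2 : ℝ) * ((w - μ) ⬝ᵥ Hb *ᵥ (w - μ)) +
        (-(1 / 2 : ℝ) * (w ⬝ᵥ Om *ᵥ w) + lam ⬝ᵥ w) =
      (-(1 / 2 : ℝ) * (w ⬝ᵥ (Hb + Om) *ᵥ w) + (Hb *ᵥ μ + lam) ⬝ᵥ w) +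
        -(1 / 2 : ℝ) * (μ ⬝ᵥ Hb *ᵥ μ) := by
  have e1 : μ ⬝ᵥ Hb *ᵥ w = (Hb *ᵥ μ) ⬝ᵥ w := dot_shift hHb μ w
  have e2 : w ⬝ᵥ Hb *ᵥ μ = (Hb *ᵥ μ) ⬝ᵥ w := by rw [dot_symm hHb]; exact e1
  rw [Matrix.mulVec_sub, dotProduct_sub, sub_dotProduct, sub_dotProduct,
    Matrix.add_mulVec, dotProduct_add, add_dotProduct, e1, e2]
  ring

private lemma FOm_eq {k : ℕ} {Om Hm : Matrix (Fin k) (Fin k) ℝ} (hΩ : Om.PosSemidef)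
    (hHm : IsUnit Hm.det) :
    (Hm * Hmᵀ)⁻¹ * ((Hm * Hmᵀ)⁻¹ + Om)⁻¹ = 1 - Om * Hm * (Hmᵀ * Om * Hm + 1)⁻¹ * Hmᵀ ∧
    (1 - Om * Hm * (Hmᵀ * Om * Hm + 1)⁻¹ * Hmᵀ) * Om =
      (Hm * Hmᵀ)⁻¹ - (Hm * Hmᵀ)⁻¹ * ((Hm * Hmᵀ)⁻¹ + Om)⁻¹ * (Hm * Hmᵀ)⁻¹ := by
  have hH2 : (Hm * Hmᵀ).PosDef := posDef_mul_transpose hHm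
  have hH2det : IsUnit (Hm * Hmᵀ).det := hH2.det_pos.ne'.isUnit
  have hM : (Hmᵀ * Om * Hm + 1).PosDef :=
    Matrix.PosDef.posSemidef_add (psd_conj hΩ Hm) Matrix.PosDef.one
  have hMdet' : IsUnit (Hmᵀ * (Om * Hm) + 1).det := by
    rw [← Matrix.mul_assoc]; exact hM.det_pos.ne'.isUnit
  obtain ⟨w1, w2⟩ := woodbury (Om * Hm) Hmᵀ hMdet'
  rw [← Matrix.mul_assoc Hmᵀ Om Hm] at w1 w2
  have h1 : ((Hm * Hmᵀ)⁻¹ + Om) * (Hm * Hmᵀ) = 1 + Om * Hm * Hmᵀ := by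
    rw [Matrix.add_mul, Matrix.nonsing_inv_mul _ hH2det, ← Matrix.mul_assoc]
  have hF : (Hm * Hmᵀ)⁻¹ * ((Hm * Hmᵀ)⁻¹ + Om)⁻¹ =
      1 - Om * Hm * (Hmᵀ * Om * Hm + 1)⁻¹ * Hmᵀ := by
    calc (Hm * Hmᵀ)⁻¹ * ((Hm * Hmᵀ)⁻¹ + Om)⁻¹
        = (((Hm * Hmᵀ)⁻¹ + Om) * (Hm * Hmᵀ))⁻¹ := (Matrix.mul_inv_rev _ _).symm
      _ = (1 + Om * Hm * Hmᵀ)⁻¹ := by rw [h1]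
      _ = 1 - Om * Hm * (Hmᵀ * Om * Hm + 1)⁻¹ * Hmᵀ := Matrix.inv_eq_right_inv w1
  refine ⟨hF, ?_⟩
  have hstep : (1 - Om * Hm * (Hmᵀ * Om * Hm + 1)⁻¹ * Hmᵀ) * (Om * Hm * Hmᵀ) =
      1 - (1 - Om * Hm * (Hmᵀ * Om * Hm + 1)⁻¹ * Hmᵀ) := by
    have := w2
    rw [Matrix.mul_add, Matrix.mul_one] at this
    linear_combination (norm := noncomm_ring) this
  calc (1 - Om * Hm * (Hmᵀ * Om * Hm + 1)⁻¹ * Hmᵀ) * Om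
      = (1 - Om * Hm * (Hmᵀ * Om * Hm + 1)⁻¹ * Hmᵀ) * Om * ((Hm * Hmᵀ) * (Hm * Hmᵀ)⁻¹) := by
        rw [Matrix.mul_nonsing_inv _ hH2det, Matrix.mul_one]
    _ = ((1 - Om * Hm * (Hmᵀ * Om * Hm + 1)⁻¹ * Hmᵀ) * (Om * Hm * Hmᵀ)) * (Hm * Hmᵀ)⁻¹ := by
        noncomm_ring
    _ = (1 - (1 - Om * Hm * (Hmᵀ * Om * Hm + 1)⁻¹ * Hmᵀ)) * (Hm * Hmᵀ)⁻¹ := by rw [hstep]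
    _ = (Hm * Hmᵀ)⁻¹ - (1 - Om * Hm * (Hmᵀ * Om * Hm + 1)⁻¹ * Hmᵀ) * (Hm * Hmᵀ)⁻¹ := by
        noncomm_ring
    _ = (Hm * Hmᵀ)⁻¹ - (Hm * Hmᵀ)⁻¹ * ((Hm * Hmᵀ)⁻¹ + Om)⁻¹ * (Hm * Hmᵀ)⁻¹ := by rw [← hF]

private lemma Omega_psd {k : ℕ} {Om Hm : Matrix (Fin k) (Fin k) ℝ} (hΩ : Om.PosSemidef)
    (Tm : Matrix (Fin k) (Fin k) ℝ) :
    (Tmᵀ * (1 - Om * Hm * (Hmᵀ * Om * Hm + 1)⁻¹ * Hmᵀ) * Om * Tm).PosSemidef := by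
  obtain ⟨L, hL⟩ := psd_sqrt hΩ
  rw [real_ct] at hL
  have hKtK : ((L * Hm)ᵀ * (L * Hm)).PosSemidef := by
    have := Matrix.posSemidef_conjTranspose_mul_self (L * Hm)
    rwa [real_ct] at this
  have hM' : ((L * Hm)ᵀ * (L * Hm) + 1).PosDef :=
    Matrix.PosDef.posSemidef_add hKtK Matrix.PosDef.one
  have hdet : IsUnit ((L * Hm)ᵀ * (L * Hm) + 1).det := hM'.det_pos.ne'.isUnit
  obtain ⟨w1, _⟩ := woodbury (L * Hm) (L * Hm)ᵀ hdet
  have hKKt : ((L * Hm) * (L * Hm)ᵀ).PosSemidef := by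
    have := Matrix.posSemidef_self_mul_conjTranspose (L * Hm)
    rwa [real_ct] at this
  have hinv : (1 + (L * Hm) * (L * Hm)ᵀ).PosDef :=
    Matrix.PosDef.add_posSemidef Matrix.PosDef.one hKKt
  have hrep : 1 - (L * Hm) * ((L * Hm)ᵀ * (L * Hm) + 1)⁻¹ * (L * Hm)ᵀ =
      (1 + (L * Hm) * (L * Hm)ᵀ)⁻¹ := (Matrix.inv_eq_right_inv w1).symm
  have hMeq : Hmᵀ * Om * Hm + 1 = (L * Hm)ᵀ * (L * Hm) + 1 := by
    rw [hL, Matrix.transpose_mul]; noncomm_ring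
  have hFOm : (1 - Om * Hm * (Hmᵀ * Om * Hm + 1)⁻¹ * Hmᵀ) * Om =
      Lᵀ * (1 + (L * Hm) * (L * Hm)ᵀ)⁻¹ * L := by
    rw [hMeq, hL]
    calc (1 - Lᵀ * L * Hm * ((L * Hm)ᵀ * (L * Hm) + 1)⁻¹ * Hmᵀ) * (Lᵀ * L)
        = Lᵀ * (1 - (L * Hm) * ((L * Hm)ᵀ * (L * Hm) + 1)⁻¹ * (L * Hm)ᵀ) * L := by
          rw [Matrix.transpose_mul]; noncomm_ring
      _ = Lᵀ * (1 + (L * Hm) * (L * Hm)ᵀ)⁻¹ * L := by rw [hrep]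
  have key : Tmᵀ * (1 - Om * Hm * (Hmᵀ * Om * Hm + 1)⁻¹ * Hmᵀ) * Om * Tm =
      (L * Tm)ᵀ * (1 + (L * Hm) * (L * Hm)ᵀ)⁻¹ * (L * Tm) := by
    rw [Matrix.mul_assoc Tmᵀ _ Om, hFOm, Matrix.transpose_mul L Tm]
    noncomm_ring
  rw [key]
  exact psd_conj hinv.inv.posSemidef (L * Tm)

private lemma gauss_core {k : ℕ} {A : Matrix (Fin k) (Fin k) ℝ} (hA : A.PosDef) :
    Integrable (fun v : Fin k → ℝ => Real.exp (-(1 / 2 : ℝ) * (v ⬝ᵥ A *ᵥ v))) ∧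
    0 < ∫ v : Fin k → ℝ, Real.exp (-(1 / 2 : ℝ) * (v ⬝ᵥ A *ᵥ v)) := by
  obtain ⟨Bm, hBm⟩ := psd_sqrt hA.posSemidef
  rw [real_ct] at hBm
  have hdet : Bm.det ≠ 0 := by
    intro h
    have h2 : A.det = 0 := by rw [hBm, Matrix.det_mul, Matrix.det_transpose, h, mul_zero]
    exact hA.det_pos.ne' h2
  have hq : ∀ v : Fin k → ℝ, v ⬝ᵥ A *ᵥ v = (Bm *ᵥ v) ⬝ᵥ (Bm *ᵥ v) := by
    intro v
    rw [hBm, ← Matrix.mulVec_mulVec, Matrix.dotProduct_mulVec, vecMul_transpose]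
  have hsum : ∀ u : Fin k → ℝ,
      Real.exp (-(1 / 2 : ℝ) * (u ⬝ᵥ u)) = ∏ i, Real.exp (-(1 / 2 : ℝ) * u i ^ 2) := by
    intro u
    rw [← Real.exp_sum]
    congr 1
    rw [show (u ⬝ᵥ u) = ∑ i, u i * u i from rfl, Finset.mul_sum]
    exact Finset.sum_congr rfl fun i _ => by ring
  have h1d : Integrable (fun x : ℝ => Real.exp (-(1 / 2 : ℝ) * x ^ 2)) :=
    integrable_exp_neg_mul_sq (by norm_num : (0:ℝ) < 1/2)
  have hgi : Integrable (fun u : Fin k → ℝ => ∏ i, Real.exp (-(1 / 2 : ℝ) * u i ^ 2)) :=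
    Integrable.fintype_prod fun _ => h1d
  have hgc : Continuous (fun u : Fin k → ℝ => ∏ i, Real.exp (-(1 / 2 : ℝ) * u i ^ 2)) := by
    refine continuous_finset_prod _ fun i _ => ?_
    exact Real.continuous_exp.comp (continuous_const.mul ((continuous_apply i).pow 2))
  have hgpos : 0 < ∫ u : Fin k → ℝ, ∏ i, Real.exp (-(1 / 2 : ℝ) * u i ^ 2) := by
    rw [MeasureTheory.integral_fintype_prod_volume_eq_pow (ι := Fin k)
      (fun x : ℝ => Real.exp (-(1 / 2 : ℝ) * x ^ 2))]
    have hpos : 0 < ∫ x : ℝ, Real.exp (-(1 / 2 : ℝ) * x ^ 2) := by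
      rw [integral_gaussian (1 / 2 : ℝ)]
      positivity
    positivity
  have hmeas : Measurable (Matrix.toLin' Bm) :=
    (LinearMap.continuous_on_pi _).measurable
  have hmap : Measure.map (Matrix.toLin' Bm) volume =
      ENNReal.ofReal |Bm.det⁻¹| • volume :=
    Real.map_matrix_volume_pi_eq_smul_volume_pi hdet
  constructor
  · have hInt : Integrable (fun u : Fin k → ℝ => ∏ i, Real.exp (-(1 / 2 : ℝ) * u i ^ 2))
        (Measure.map (Matrix.toLin' Bm) volume) := by
      rw [hmap]; exact hgi.smul_measure ENNReal.ofReal_ne_top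
    have h3 := (integrable_map_measure hgc.aestronglyMeasurable hmeas.aemeasurable).mp hInt
    refine h3.congr (Filter.Eventually.of_forall fun v => ?_)
    simp only [Function.comp_apply, Matrix.toLin'_apply]
    rw [hq]
    exact (hsum _).symm
  · have h2 : ∫ v : Fin k → ℝ, Real.exp (-(1 / 2 : ℝ) * (v ⬝ᵥ A *ᵥ v)) =
        ∫ u, (fun u : Fin k → ℝ => ∏ i, Real.exp (-(1 / 2 : ℝ) * u i ^ 2)) u
          ∂(Measure.map (Matrix.toLin' Bm) volume) := by
      rw [MeasureTheory.integral_map hmeas.aemeasurable hgc.aestronglyMeasurable]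
      refine integral_congr_ae (Filter.Eventually.of_forall fun v => ?_)
      simp only [Matrix.toLin'_apply]
      rw [hq]
      exact hsum _
    rw [h2, hmap, MeasureTheory.integral_smul_measure,
      ENNReal.toReal_ofReal (abs_nonneg _), smul_eq_mul]
    have hd : 0 < |Bm.det⁻¹| := by positivity
    exact mul_pos hd hgpos

private lemma gauss_int {k : ℕ} {A : Matrix (Fin k) (Fin k) ℝ} (hA : A.PosDef)
    (b : Fin k → ℝ) :
    ∫ w : Fin k → ℝ, Real.exp (-(1 / 2 : ℝ) * (w ⬝ᵥ A *ᵥ w) + b ⬝ᵥ w) =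
      (∫ v : Fin k → ℝ, Real.exp (-(1 / 2 : ℝ) * (v ⬝ᵥ A *ᵥ v))) *
        Real.exp ((1 / 2 : ℝ) * (b ⬝ᵥ A⁻¹ *ᵥ b)) := by
  have hAs : Aᵀ = A := herm_t hA.isHermitian
  have hAc : A *ᵥ (A⁻¹ *ᵥ b) = b := by
    rw [Matrix.mulVec_mulVec, Matrix.mul_nonsing_inv _ hA.det_pos.ne'.isUnit,
      Matrix.one_mulVec]
  have key : ∀ w : Fin k → ℝ, -(1 / 2 : ℝ) * (w ⬝ᵥ A *ᵥ w) + b ⬝ᵥ w =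
      -(1 / 2 : ℝ) * ((w - A⁻¹ *ᵥ b) ⬝ᵥ A *ᵥ (w - A⁻¹ *ᵥ b)) +
        (1 / 2 : ℝ) * (b ⬝ᵥ A⁻¹ *ᵥ b) := by
    intro w
    have m1 : w ⬝ᵥ A *ᵥ (A⁻¹ *ᵥ b) = b ⬝ᵥ w := by rw [hAc, dotProduct_comm]
    have m2 : (A⁻¹ *ᵥ b) ⬝ᵥ A *ᵥ w = b ⬝ᵥ w := by rw [dot_symm hAs]; exact m1
    have m3 : (A⁻¹ *ᵥ b) ⬝ᵥ A *ᵥ (A⁻¹ *ᵥ b) = b ⬝ᵥ A⁻¹ *ᵥ b := by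
      rw [hAc, dotProduct_comm]
    rw [Matrix.mulVec_sub, dotProduct_sub, sub_dotProduct,
      sub_dotProduct, m1, m2, m3]
    ring
  simp_rw [key, Real.exp_add]
  rw [MeasureTheory.integral_mul_const]
  congr 1
  exact integral_sub_right_eq_self
    (fun v => Real.exp (-(1 / 2 : ℝ) * (v ⬝ᵥ A *ᵥ v))) (A⁻¹ *ᵥ b)

private lemma gObs_form {m p J : ℕ} (cv : Fin J → Fin p → ℝ)
    (B : Fin J → Matrix (Fin p) (Fin m) ℝ) (G : Fin J → Matrix (Fin p) (Fin p) ℝ)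
    (hG : ∀ j, IsUnit (G j).det) (aj : Fin J) (yv : Fin p → ℝ) :
    ((B aj)ᵀ * (G aj * (G aj)ᵀ)⁻¹ * B aj).PosSemidef ∧
    ∃ c : ℝ, 0 < c ∧ ∀ z : Fin m → ℝ,
      gObs cv B G aj z yv =
        c * Real.exp (-(1 / 2 : ℝ) * (z ⬝ᵥ ((B aj)ᵀ * (G aj * (G aj)ᵀ)⁻¹ * B aj) *ᵥ z) +
          (((B aj)ᵀ * (G aj * (G aj)ᵀ)⁻¹) *ᵥ (yv - cv aj)) ⬝ᵥ z) := by
  have hGb : (G aj * (G aj)ᵀ).PosDef := posDef_mul_transpose (hG aj)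
  have hQ : ((G aj * (G aj)ᵀ)⁻¹).PosDef := hGb.inv
  have hQs : ((G aj * (G aj)ᵀ)⁻¹)ᵀ = (G aj * (G aj)ᵀ)⁻¹ := herm_t hQ.isHermitian
  refine ⟨psd_conj hQ.posSemidef (B aj), ?_⟩
  set c0 : ℝ := ((2 * π) ^ (p : ℝ) * (G aj * (G aj)ᵀ).det) ^ (-(1 : ℝ) / 2) with hc0
  have hc0pos : 0 < c0 := by
    rw [hc0]
    exact Real.rpow_pos_of_pos (mul_pos (Real.rpow_pos_of_pos (by positivity) _)
      hGb.det_pos) _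
  refine ⟨c0 * Real.exp (-(1 / 2 : ℝ) *
      ((yv - cv aj) ⬝ᵥ (G aj * (G aj)ᵀ)⁻¹ *ᵥ (yv - cv aj))),
    by positivity, fun z => ?_⟩
  show c0 * Real.exp (-(1 / 2 : ℝ) *
      ((yv - (cv aj + B aj *ᵥ z)) ⬝ᵥ ((G aj * (G aj)ᵀ)⁻¹ *ᵥ (yv - (cv aj + B aj *ᵥ z))))) = _
  have hsub : yv - (cv aj + B aj *ᵥ z) = (yv - cv aj) - B aj *ᵥ z := by
    funext i; simp [sub_add_eq_sub_sub]
  rw [hsub, show -(1 / 2 : ℝ) * (((yv - cv aj) - B aj *ᵥ z) ⬝ᵥ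
      ((G aj * (G aj)ᵀ)⁻¹ *ᵥ ((yv - cv aj) - B aj *ᵥ z))) =
      -(1 / 2 : ℝ) * (z ⬝ᵥ ((B aj)ᵀ * (G aj * (G aj)ᵀ)⁻¹ * B aj) *ᵥ z) +
        (((B aj)ᵀ * (G aj * (G aj)ᵀ)⁻¹) *ᵥ (yv - cv aj)) ⬝ᵥ z +
        -(1 / 2 : ℝ) * ((yv - cv aj) ⬝ᵥ (G aj * (G aj)ᵀ)⁻¹ *ᵥ (yv - cv aj))
    from quad_sub_expand hQs (B aj) (yv - cv aj) z]
  rw [Real.exp_add]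
  ring

private lemma E_identity {k : ℕ} {Om Hm Tm : Matrix (Fin k) (Fin k) ℝ} (hΩ : Om.PosSemidef)
    (hHm : IsUnit Hm.det) (lam d z : Fin k → ℝ) :
    (1 / 2 : ℝ) * (((Hm * Hmᵀ)⁻¹ *ᵥ (d + Tm *ᵥ z) + lam) ⬝ᵥ
        ((Hm * Hmᵀ)⁻¹ + Om)⁻¹ *ᵥ ((Hm * Hmᵀ)⁻¹ *ᵥ (d + Tm *ᵥ z) + lam)) +
      -(1 / 2 : ℝ) * ((d + Tm *ᵥ z) ⬝ᵥ (Hm * Hmᵀ)⁻¹ *ᵥ (d + Tm *ᵥ z)) =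
    -(1 / 2 : ℝ) * (z ⬝ᵥ (Tmᵀ * (1 - Om * Hm * (Hmᵀ * Om * Hm + 1)⁻¹ * Hmᵀ) * Om * Tm) *ᵥ z) +
      (Tmᵀ *ᵥ ((1 - Om * Hm * (Hmᵀ * Om * Hm + 1)⁻¹ * Hmᵀ) *ᵥ (lam - Om *ᵥ d))) ⬝ᵥ z +
      ((1 / 2 : ℝ) * (((Hm * Hmᵀ)⁻¹ *ᵥ d + lam) ⬝ᵥ
          ((Hm * Hmᵀ)⁻¹ + Om)⁻¹ *ᵥ ((Hm * Hmᵀ)⁻¹ *ᵥ d + lam)) +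
        -(1 / 2 : ℝ) * (d ⬝ᵥ (Hm * Hmᵀ)⁻¹ *ᵥ d)) := by
  obtain ⟨hF, hFOm⟩ := FOm_eq hΩ hHm
  have hH2 : (Hm * Hmᵀ).PosDef := posDef_mul_transpose hHm
  have hHb : ((Hm * Hmᵀ)⁻¹).PosDef := hH2.inv
  have hHbs : ((Hm * Hmᵀ)⁻¹)ᵀ = (Hm * Hmᵀ)⁻¹ := herm_t hHb.isHermitian
  have hApd : ((Hm * Hmᵀ)⁻¹ + Om).PosDef := Matrix.PosDef.add_posSemidef hHb hΩ
  have hPs : (((Hm * Hmᵀ)⁻¹ + Om)⁻¹)ᵀ = ((Hm * Hmᵀ)⁻¹ + Om)⁻¹ := herm_t hApd.inv.isHermitian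
  have S1 : z ⬝ᵥ (Tmᵀ * (1 - Om * Hm * (Hmᵀ * Om * Hm + 1)⁻¹ * Hmᵀ) * Om * Tm) *ᵥ z =
      (Tm *ᵥ z) ⬝ᵥ (Hm * Hmᵀ)⁻¹ *ᵥ (Tm *ᵥ z) -
        ((Hm * Hmᵀ)⁻¹ *ᵥ (Tm *ᵥ z)) ⬝ᵥ ((Hm * Hmᵀ)⁻¹ + Om)⁻¹ *ᵥ ((Hm * Hmᵀ)⁻¹ *ᵥ (Tm *ᵥ z)) := by
    rw [← Matrix.mulVec_mulVec, ← Matrix.mulVec_mulVec, ← Matrix.mulVec_mulVec, dot_tmul,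
      Matrix.mulVec_mulVec, hFOm, Matrix.sub_mulVec, dotProduct_sub]
    congr 1
    rw [← Matrix.mulVec_mulVec, ← Matrix.mulVec_mulVec, dot_shift hHbs]
  have S2 : (Tmᵀ *ᵥ ((1 - Om * Hm * (Hmᵀ * Om * Hm + 1)⁻¹ * Hmᵀ) *ᵥ (lam - Om *ᵥ d))) ⬝ᵥ z =
      ((Hm * Hmᵀ)⁻¹ *ᵥ (Tm *ᵥ z)) ⬝ᵥ ((Hm * Hmᵀ)⁻¹ + Om)⁻¹ *ᵥ lam -
        (d ⬝ᵥ (Hm * Hmᵀ)⁻¹ *ᵥ (Tm *ᵥ z) -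
          ((Hm * Hmᵀ)⁻¹ *ᵥ d) ⬝ᵥ ((Hm * Hmᵀ)⁻¹ + Om)⁻¹ *ᵥ ((Hm * Hmᵀ)⁻¹ *ᵥ (Tm *ᵥ z))) := by
    rw [tmul_dot, Matrix.mulVec_sub, sub_dotProduct]
    congr 1
    · rw [dotProduct_comm, ← hF, ← Matrix.mulVec_mulVec, dot_shift hHbs]
    · rw [dotProduct_comm, Matrix.mulVec_mulVec, hFOm, Matrix.sub_mulVec,
        dotProduct_sub, dot_symm hHbs (Tm *ᵥ z) d]
      congr 1
      rw [← Matrix.mulVec_mulVec, ← Matrix.mulVec_mulVec, dot_shift hHbs,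
        dot_symm hPs ((Hm * Hmᵀ)⁻¹ *ᵥ (Tm *ᵥ z)) ((Hm * Hmᵀ)⁻¹ *ᵥ d)]
  have Q3 : ((Hm * Hmᵀ)⁻¹ *ᵥ (d + Tm *ᵥ z) + lam) ⬝ᵥ ((Hm * Hmᵀ)⁻¹ + Om)⁻¹ *ᵥ
      ((Hm * Hmᵀ)⁻¹ *ᵥ (d + Tm *ᵥ z) + lam) =
      ((Hm * Hmᵀ)⁻¹ *ᵥ d) ⬝ᵥ ((Hm * Hmᵀ)⁻¹ + Om)⁻¹ *ᵥ ((Hm * Hmᵀ)⁻¹ *ᵥ d) +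
      ((Hm * Hmᵀ)⁻¹ *ᵥ (Tm *ᵥ z)) ⬝ᵥ ((Hm * Hmᵀ)⁻¹ + Om)⁻¹ *ᵥ ((Hm * Hmᵀ)⁻¹ *ᵥ (Tm *ᵥ z)) +
      lam ⬝ᵥ ((Hm * Hmᵀ)⁻¹ + Om)⁻¹ *ᵥ lam +
      2 * (((Hm * Hmᵀ)⁻¹ *ᵥ d) ⬝ᵥ ((Hm * Hmᵀ)⁻¹ + Om)⁻¹ *ᵥ ((Hm * Hmᵀ)⁻¹ *ᵥ (Tm *ᵥ z))) +
      2 * (((Hm * Hmᵀ)⁻¹ *ᵥ d) ⬝ᵥ ((Hm * Hmᵀ)⁻¹ + Om)⁻¹ *ᵥ lam) +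
      2 * (((Hm * Hmᵀ)⁻¹ *ᵥ (Tm *ᵥ z)) ⬝ᵥ ((Hm * Hmᵀ)⁻¹ + Om)⁻¹ *ᵥ lam) := by
    rw [Matrix.mulVec_add]
    exact quad3 hPs _ _ _
  rw [Q3, quad2 hHbs d (Tm *ᵥ z), quad2 hPs ((Hm * Hmᵀ)⁻¹ *ᵥ d) lam, S1, S2]
  ring

end FFBSAux

section StepPoint

open MeasureTheory Matrix Real

private lemma step_point {k : ℕ} {Hb Om : Matrix (Fin k) (Fin k) ℝ} (hHbs : Hbᵀ = Hb)
    (cH C : ℝ) (μ lam w : Fin k → ℝ) :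
    (cH * Real.exp (-(1 / 2 : ℝ) * ((w - μ) ⬝ᵥ (Hb *ᵥ (w - μ))))) *
      (C * Real.exp (-(1 / 2 : ℝ) * (w ⬝ᵥ Om *ᵥ w) + lam ⬝ᵥ w)) =
    (cH * C * Real.exp (-(1 / 2 : ℝ) * (μ ⬝ᵥ Hb *ᵥ μ))) *
      Real.exp (-(1 / 2 : ℝ) * (w ⬝ᵥ (Hb + Om) *ᵥ w) + (Hb *ᵥ μ + lam) ⬝ᵥ w) := by
  have h := exp_comb (Om := Om) hHbs μ lam w
  calc (cH * Real.exp (-(1 / 2 : ℝ) * ((w - μ) ⬝ᵥ (Hb *ᵥ (w - μ))))) *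
      (C * Real.exp (-(1 / 2 : ℝ) * (w ⬝ᵥ Om *ᵥ w) + lam ⬝ᵥ w))
      = (cH * C) * Real.exp (-(1 / 2 : ℝ) * ((w - μ) ⬝ᵥ Hb *ᵥ (w - μ)) +
          (-(1 / 2 : ℝ) * (w ⬝ᵥ Om *ᵥ w) + lam ⬝ᵥ w)) := by
        simp only [Real.exp_add]; ring
    _ = (cH * C) * Real.exp ((-(1 / 2 : ℝ) * (w ⬝ᵥ (Hb + Om) *ᵥ w) + (Hb *ᵥ μ + lam) ⬝ᵥ w) +
          -(1 / 2 : ℝ) * (μ ⬝ᵥ Hb *ᵥ μ)) := by rw [h]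
    _ = (cH * C * Real.exp (-(1 / 2 : ℝ) * (μ ⬝ᵥ Hb *ᵥ μ))) *
          Real.exp (-(1 / 2 : ℝ) * (w ⬝ᵥ (Hb + Om) *ᵥ w) + (Hb *ᵥ μ + lam) ⬝ᵥ w) := by
        simp only [Real.exp_add]; ring

end StepPoint

/-- **Backward Gaussian form of the FFBS smoother.**  Each `Ω̂_u` is positive semidefinite
and for every `i ≤ u ≤ n` there is `C_u > 0` with `ψ_u(z) = C_u exp(−½ z'Ω̂_u z + λ̂_u'z)`. -/
theorem ffbs_backward_gaussian_form {m p J : ℕ} (dv : Fin J → Fin m → ℝ)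
    (T H : Fin J → Matrix (Fin m) (Fin m) ℝ) (cv : Fin J → Fin p → ℝ)
    (B : Fin J → Matrix (Fin p) (Fin m) ℝ) (G : Fin J → Matrix (Fin p) (Fin p) ℝ)
    (hH : ∀ j, IsUnit (H j).det) (hG : ∀ j, IsUnit (G j).det)
    (a : ℕ → Fin J) (y : ℕ → Fin p → ℝ) (i n : ℕ) (hi : 1 ≤ i) (hin : i ≤ n) :
    ∀ u, i ≤ u → u ≤ n →
      ((ffbsCoef dv T H cv B G a y n (n - u)).1).PosSemidef ∧
      ∃ C : ℝ, 0 < C ∧ ∀ z : Fin m → ℝ,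
        backDens dv T H cv B G a y n (n - u) z =
          C * Real.exp (-(1 / 2 : ℝ) *
              (z ⬝ᵥ ((ffbsCoef dv T H cv B G a y n (n - u)).1 *ᵥ z)) +
            (ffbsCoef dv T H cv B G a y n (n - u)).2 ⬝ᵥ z) := by
  suffices h : ∀ k : ℕ, ((ffbsCoef dv T H cv B G a y n k).1).PosSemidef ∧
      ∃ C : ℝ, 0 < C ∧ ∀ z : Fin m → ℝ,
        backDens dv T H cv B G a y n k z =
          C * Real.exp (-(1 / 2 : ℝ) * (z ⬝ᵥ ((ffbsCoef dv T H cv B G a y n k).1 *ᵥ z)) +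
            (ffbsCoef dv T H cv B G a y n k).2 ⬝ᵥ z) by
    intro u _ _
    exact h (n - u)
  intro k
  induction k with
  | zero =>
    obtain ⟨hpsd, c, hc, hform⟩ := gObs_form cv B G hG (a n) (y n)
    exact ⟨hpsd, c, hc, fun z => hform z⟩
  | succ k ih =>
    obtain ⟨hΩ, C, hCpos, hC⟩ := ih
    set j := a (n - k) with hj
    set u' := n - (k + 1) with hu'
    set Om := (ffbsCoef dv T H cv B G a y n k).1 with hOm
    set lamk := (ffbsCoef dv T H cv B G a y n k).2 with hlamk
    set Fm := 1 - Om * H j * ((H j)ᵀ * Om * H j + 1)⁻¹ * (H j)ᵀ with hFm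
    set Ou := (T j)ᵀ * Fm * Om * T j with hOu
    set lamu := (T j)ᵀ *ᵥ (Fm *ᵥ (lamk - Om *ᵥ dv j)) with hlamu
    set Qg := (B (a u'))ᵀ * (G (a u') * (G (a u'))ᵀ)⁻¹ * B (a u') with hQg
    set lg := ((B (a u'))ᵀ * (G (a u') * (G (a u'))ᵀ)⁻¹) *ᵥ (y u' - cv (a u')) with hlg
    have hcoef : ffbsCoef dv T H cv B G a y n (k + 1) = (Ou + Qg, lamu + lg) := by
      simp only [ffbsCoef]; rfl
    -- positive definiteness facts
    have hH2 : (H j * (H j)ᵀ).PosDef := posDef_mul_transpose (hH j)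
    have hHb : ((H j * (H j)ᵀ)⁻¹).PosDef := hH2.inv
    have hHbs : ((H j * (H j)ᵀ)⁻¹)ᵀ = (H j * (H j)ᵀ)⁻¹ := herm_t hHb.isHermitian
    have hA : ((H j * (H j)ᵀ)⁻¹ + Om).PosDef := Matrix.PosDef.add_posSemidef hHb hΩ
    obtain ⟨hInt, hIpos⟩ := gauss_core hA
    set I0 : ℝ := ∫ v : Fin m → ℝ,
      Real.exp (-(1 / 2 : ℝ) * (v ⬝ᵥ ((H j * (H j)ᵀ)⁻¹ + Om) *ᵥ v)) with hI0
    obtain ⟨hpsdG, cG, hcGpos, hGform⟩ := gObs_form cv B G hG (a u') (y u')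
    simp only [← hQg, ← hlg] at hGform
    constructor
    · rw [hcoef]
      exact (Omega_psd hΩ (T j)).add hpsdG
    · set cH : ℝ := ((2 * π) ^ (m : ℝ) * (H j * (H j)ᵀ).det) ^ (-(1 : ℝ) / 2) with hcH
      have hcHpos : 0 < cH := by
        rw [hcH]
        exact Real.rpow_pos_of_pos
          (mul_pos (Real.rpow_pos_of_pos (by positivity) _) hH2.det_pos) _
      set E0 : ℝ := (1 / 2 : ℝ) * (((H j * (H j)ᵀ)⁻¹ *ᵥ dv j + lamk) ⬝ᵥ
          ((H j * (H j)ᵀ)⁻¹ + Om)⁻¹ *ᵥ ((H j * (H j)ᵀ)⁻¹ *ᵥ dv j + lamk)) +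
        -(1 / 2 : ℝ) * (dv j ⬝ᵥ (H j * (H j)ᵀ)⁻¹ *ᵥ dv j) with hE0
      refine ⟨cG * (cH * C * I0 * Real.exp E0),
        mul_pos hcGpos (mul_pos (mul_pos (mul_pos hcHpos hCpos) hIpos) (Real.exp_pos _)),
        fun z => ?_⟩
      have hintval : (∫ w : Fin m → ℝ, mKer dv T H j z w *
            backDens dv T H cv B G a y n k w) =
          (cH * C * Real.exp (-(1 / 2 : ℝ) *
              ((dv j + T j *ᵥ z) ⬝ᵥ (H j * (H j)ᵀ)⁻¹ *ᵥ (dv j + T j *ᵥ z)))) *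
            (I0 * Real.exp ((1 / 2 : ℝ) *
              (((H j * (H j)ᵀ)⁻¹ *ᵥ (dv j + T j *ᵥ z) + lamk) ⬝ᵥ
                ((H j * (H j)ᵀ)⁻¹ + Om)⁻¹ *ᵥ
                  ((H j * (H j)ᵀ)⁻¹ *ᵥ (dv j + T j *ᵥ z) + lamk)))) := by
        have hpt : ∀ w : Fin m → ℝ,
            mKer dv T H j z w * backDens dv T H cv B G a y n k w =
            (cH * C * Real.exp (-(1 / 2 : ℝ) *
                ((dv j + T j *ᵥ z) ⬝ᵥ (H j * (H j)ᵀ)⁻¹ *ᵥ (dv j + T j *ᵥ z)))) *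
              Real.exp (-(1 / 2 : ℝ) * (w ⬝ᵥ ((H j * (H j)ᵀ)⁻¹ + Om) *ᵥ w) +
                ((H j * (H j)ᵀ)⁻¹ *ᵥ (dv j + T j *ᵥ z) + lamk) ⬝ᵥ w) := by
          intro w
          rw [hC w]
          exact step_point hHbs cH C (dv j + T j *ᵥ z) lamk w
        simp_rw [hpt]
        rw [MeasureTheory.integral_const_mul,
          gauss_int hA ((H j * (H j)ᵀ)⁻¹ *ᵥ (dv j + T j *ᵥ z) + lamk), ← hI0]
      have hback : backDens dv T H cv B G a y n (k + 1) z =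
          gObs cv B G (a u') z (y u') *
            ∫ w : Fin m → ℝ, mKer dv T H j z w * backDens dv T H cv B G a y n k w := by
        simp only [backDens]; rfl
      rw [hback, hintval, hGform z, hcoef]
      have hE := E_identity (Tm := T j) hΩ (hH j) lamk (dv j) z
      simp only [← hFm, ← hOu, ← hlamu, ← hE0] at hE
      have hfin : (-(1 / 2 : ℝ) * (z ⬝ᵥ Qg *ᵥ z) + lg ⬝ᵥ z) +
          (-(1 / 2 : ℝ) * (z ⬝ᵥ Ou *ᵥ z) + lamu ⬝ᵥ z) =
          -(1 / 2 : ℝ) * (z ⬝ᵥ ((Ou + Qg, lamu + lg).1 *ᵥ z)) + (Ou + Qg, lamu + lg).2 ⬝ᵥ z := by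
        simp only [Prod.fst, Prod.snd]
        rw [Matrix.add_mulVec, dotProduct_add, add_dotProduct]
        ring
      calc cG * Real.exp (-(1 / 2 : ℝ) * (z ⬝ᵥ Qg *ᵥ z) + lg ⬝ᵥ z) *
            ((cH * C * Real.exp (-(1 / 2 : ℝ) *
                ((dv j + T j *ᵥ z) ⬝ᵥ (H j * (H j)ᵀ)⁻¹ *ᵥ (dv j + T j *ᵥ z)))) *
              (I0 * Real.exp ((1 / 2 : ℝ) *
                (((H j * (H j)ᵀ)⁻¹ *ᵥ (dv j + T j *ᵥ z) + lamk) ⬝ᵥ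
                  ((H j * (H j)ᵀ)⁻¹ + Om)⁻¹ *ᵥ
                    ((H j * (H j)ᵀ)⁻¹ *ᵥ (dv j + T j *ᵥ z) + lamk)))))
          = (cG * (cH * C * I0)) *
              (Real.exp ((1 / 2 : ℝ) *
                (((H j * (H j)ᵀ)⁻¹ *ᵥ (dv j + T j *ᵥ z) + lamk) ⬝ᵥ
                  ((H j * (H j)ᵀ)⁻¹ + Om)⁻¹ *ᵥ
                    ((H j * (H j)ᵀ)⁻¹ *ᵥ (dv j + T j *ᵥ z) + lamk)) +
                -(1 / 2 : ℝ) *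
                ((dv j + T j *ᵥ z) ⬝ᵥ (H j * (H j)ᵀ)⁻¹ *ᵥ (dv j + T j *ᵥ z)))) *
              Real.exp (-(1 / 2 : ℝ) * (z ⬝ᵥ Qg *ᵥ z) + lg ⬝ᵥ z) := by
            simp only [Real.exp_add]; ring
        _ = (cG * (cH * C * I0)) *
              (Real.exp ((-(1 / 2 : ℝ) * (z ⬝ᵥ Ou *ᵥ z) + lamu ⬝ᵥ z) + E0)) *
              Real.exp (-(1 / 2 : ℝ) * (z ⬝ᵥ Qg *ᵥ z) + lg ⬝ᵥ z) := by
            rw [hE]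
        _ = (cG * (cH * C * I0 * Real.exp E0)) *
              Real.exp ((-(1 / 2 : ℝ) * (z ⬝ᵥ Qg *ᵥ z) + lg ⬝ᵥ z) +
                (-(1 / 2 : ℝ) * (z ⬝ᵥ Ou *ᵥ z) + lamu ⬝ᵥ z)) := by
            simp only [Real.exp_add]; ring
        _ = (cG * (cH * C * I0 * Real.exp E0)) *
              Real.exp (-(1 / 2 : ℝ) * (z ⬝ᵥ ((Ou + Qg, lamu + lg).1 *ᵥ z)) +
                (Ou + Qg, lamu + lg).2 ⬝ᵥ z) := by rw [hfin]
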